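/- Let X = [0,∞) with the standard metric, let f(x) = log(1+x), and define A_k ∈ CL(X) by A_k = {k} if k ∈ {2^r : r ∈ ℕ} and A_k = {0} otherwise. Then (A_k) is Wijsman strongly Cesàro summable to {0} with respect to f, i.e., for every x ∈ [0,∞), lim_{n→∞} (1/n) ∑_{k=1}^n log(1 + |d(x,A_k) − d(x,{0})|) = 0, but (A_k) is not Wijsman strongly Cesàro summable to {0}: for every x, lim_{n→∞} (1/n) ∑_{k=1}^n |d(x,A_k) − d(x,{0})| ≠ 0. -/

import Mathlib

open Filter Metric Set
open scoped Classical

/-- A modulus: `f : [0,∞) → [0,∞)` with `f x = 0 ↔ x = 0`, subadditive,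
increasing, and continuous (all on `[0,∞)`). -/
def IsModulus (f : ℝ → ℝ) : Prop :=
  (∀ x : ℝ, 0 ≤ x → 0 ≤ f x) ∧
  (∀ x : ℝ, 0 ≤ x → (f x = 0 ↔ x = 0)) ∧
  (∀ x y : ℝ, 0 ≤ x → 0 ≤ y → f (x + y) ≤ f x + f y) ∧
  MonotoneOn f (Set.Ici 0) ∧
  ContinuousOn f (Set.Ici 0)

/-- `f` is unbounded on `[0,∞)`. -/
def IsUnboundedOn (f : ℝ → ℝ) : Prop := ∀ M : ℝ, ∃ x : ℝ, 0 ≤ x ∧ M < f x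

/-- The number of elements `k ≤ n` with `k ∈ K`. -/
noncomputable def countLe (K : Set ℕ) (n : ℕ) : ℕ := Nat.card {k : ℕ | k ≤ n ∧ k ∈ K}

/-- `K ⊆ ℕ` has `f`-density `d`: `lim_n f(|{k ≤ n : k ∈ K}|)/f(n) = d`. -/
def HasFDensity (f : ℝ → ℝ) (K : Set ℕ) (d : ℝ) : Prop :=
  Tendsto (fun n : ℕ => f (countLe K n : ℝ) / f (n : ℝ)) atTop (nhds d)

/-- `K ⊆ ℕ` has natural density `d`: `lim_n |{k ≤ n : k ∈ K}|/n = d`. -/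
def HasNatDensity (K : Set ℕ) (d : ℝ) : Prop :=
  Tendsto (fun n : ℕ => (countLe K n : ℝ) / (n : ℝ)) atTop (nhds d)

/-- Wijsman convergence: `d(x, A_k) → d(x, A)` for every `x`. -/
def WijsmanConvTo {X : Type*} [MetricSpace X] (Aseq : ℕ → Set X) (A : Set X) : Prop :=
  ∀ x : X, Tendsto (fun k : ℕ => infDist x (Aseq k)) atTop (nhds (infDist x A))

/-- Wijsman statistical convergence (with respect to the natural density). -/
def WijsmanStatConvTo {X : Type*} [MetricSpace X] (Aseq : ℕ → Set X) (A : Set X) : Prop :=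
  ∀ x : X, ∀ ε : ℝ, 0 < ε →
    HasNatDensity {k : ℕ | ε ≤ |infDist x (Aseq k) - infDist x A|} 0

/-- `f`-Wijsman statistical convergence: `[WS^f]-lim A_k = A`. -/
def FWijsmanStatConvTo (f : ℝ → ℝ) {X : Type*} [MetricSpace X]
    (Aseq : ℕ → Set X) (A : Set X) : Prop :=
  ∀ x : X, ∀ ε : ℝ, 0 < ε →
    HasFDensity f {k : ℕ | ε ≤ |infDist x (Aseq k) - infDist x A|} 0

/-- Wijsman boundedness: `sup_k d(x, A_k) < ∞` for every `x`. -/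
def WijsmanBounded {X : Type*} [MetricSpace X] (Aseq : ℕ → Set X) : Prop :=
  ∀ x : X, ∃ M : ℝ, ∀ k : ℕ, infDist x (Aseq k) ≤ M

/-- Wijsman Cesàro summability to `A`. -/
def WijsmanCesaroTo {X : Type*} [MetricSpace X] (Aseq : ℕ → Set X) (A : Set X) : Prop :=
  ∀ x : X, Tendsto (fun n : ℕ => (∑ k ∈ Finset.range n, infDist x (Aseq k)) / (n : ℝ))
    atTop (nhds (infDist x A))

/-- Wijsman strong Cesàro summability to `A` with respect to a modulus `f`:
`[Ww^f]-lim A_k = A`. -/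
def WijsmanStrongCesaroTo (f : ℝ → ℝ) {X : Type*} [MetricSpace X]
    (Aseq : ℕ → Set X) (A : Set X) : Prop :=
  ∀ x : X, Tendsto
    (fun n : ℕ => (∑ k ∈ Finset.range n, f |infDist x (Aseq k) - infDist x A|) / (n : ℝ))
    atTop (nhds 0)

/-- A slowly varying modulus: `lim_{x→∞} f(ax)/f(x) = 1` for every `a > 0`. -/
def SlowlyVaryingOn (f : ℝ → ℝ) : Prop :=
  ∀ a : ℝ, 0 < a → Tendsto (fun x : ℝ => f (a * x) / f x) atTop (nhds 1)

/-- In `X = [0,∞)` with `f(x) = log(1+x)`, the sequence `A_k = {k}`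
for `k ∈ {2^r : r ∈ ℕ}` and `A_k = {0}` otherwise is Wijsman strongly Cesàro
summable to `{0}` w.r.t. `f`, but not Wijsman strongly Cesàro summable to `{0}`. -/
theorem stmt19 :
    let X := {x : ℝ // 0 ≤ x}
    let Aseq : ℕ → Set X := fun k =>
      if ∃ r : ℕ, 0 < r ∧ k = 2 ^ r then {⟨(k : ℝ), Nat.cast_nonneg k⟩}
      else {⟨0, le_refl 0⟩}
    let A : Set X := {⟨0, le_refl 0⟩}
    (∀ x : X, Tendsto (fun n : ℕ =>
        (∑ k ∈ Finset.range n, Real.log (1 + |infDist x (Aseq k) - infDist x A|)) / (n : ℝ))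
        atTop (nhds 0)) ∧
    (∀ x : X, ¬ Tendsto (fun n : ℕ =>
        (∑ k ∈ Finset.range n, |infDist x (Aseq k) - infDist x A|) / (n : ℝ))
        atTop (nhds 0)) := by
  intro X Aseq A
  have hA : ∀ x : X, infDist x A = x.1 := by
    intro x
    rw [show A = {⟨0, le_refl 0⟩} from rfl, Metric.infDist_singleton, Subtype.dist_eq,
      Real.dist_eq]
    simp [abs_of_nonneg x.2]
  have hAseqPos : ∀ (x : X) (k : ℕ), (∃ r : ℕ, 0 < r ∧ k = 2 ^ r) →
      infDist x (Aseq k) = |x.1 - k| := by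
    intro x k hk
    simp only [Aseq, if_pos hk]
    rw [Metric.infDist_singleton, Subtype.dist_eq, Real.dist_eq]
  have hAseqNeg : ∀ (x : X) (k : ℕ), ¬(∃ r : ℕ, 0 < r ∧ k = 2 ^ r) →
      infDist x (Aseq k) = x.1 := by
    intro x k hk
    simp only [Aseq, if_neg hk]
    rw [Metric.infDist_singleton, Subtype.dist_eq, Real.dist_eq]
    simp [abs_of_nonneg x.2]
  -- key bound on the terms
  have hterm_le : ∀ (x : X) (k : ℕ), (∃ r : ℕ, 0 < r ∧ k = 2 ^ r) →
      |infDist x (Aseq k) - infDist x A| ≤ (k : ℝ) := by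
    intro x k hk
    rw [hAseqPos x k hk, hA]
    have hx := x.2
    calc |(|x.1 - k|) - x.1| = abs (abs (x.1 - k) - abs x.1) := by rw [abs_of_nonneg hx]
      _ ≤ |(x.1 - k) - x.1| := abs_abs_sub_abs_le_abs_sub _ _
      _ = (k : ℝ) := by
          rw [show (x.1 - k) - x.1 = -(k:ℝ) by ring, abs_neg, abs_of_nonneg (Nat.cast_nonneg k)]
  have hterm_zero : ∀ (x : X) (k : ℕ), ¬(∃ r : ℕ, 0 < r ∧ k = 2 ^ r) →
      |infDist x (Aseq k) - infDist x A| = 0 := by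
    intro x k hk
    rw [hAseqNeg x k hk, hA, sub_self, abs_zero]
  have hcard : ∀ n : ℕ,
      ((Finset.range n).filter (fun k => ∃ r : ℕ, 0 < r ∧ k = 2 ^ r)).card ≤ Nat.log 2 n := by
    intro n
    calc ((Finset.range n).filter (fun k => ∃ r : ℕ, 0 < r ∧ k = 2 ^ r)).card
        ≤ ((Finset.Icc 1 (Nat.log 2 n)).image (2 ^ ·)).card := by
          apply Finset.card_le_card
          intro k hk
          simp only [Finset.mem_filter, Finset.mem_range] at hk
          obtain ⟨hkn, r, hr, rfl⟩ := hk
          apply Finset.mem_image.2 ⟨r, ?_, rfl⟩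
          refine Finset.mem_Icc.2 ⟨hr, ?_⟩
          exact (Nat.le_log_iff_pow_le one_lt_two ((Nat.zero_le _).trans_lt hkn).ne').2 hkn.le
      _ ≤ (Finset.Icc 1 (Nat.log 2 n)).card := Finset.card_image_le
      _ = Nat.log 2 n := by rw [Nat.card_Icc]; omega
  have hlog2 : 0 < Real.log 2 := Real.log_pos one_lt_two
  constructor
  · intro x
    have hnonneg : ∀ n : ℕ,
        0 ≤ (∑ k ∈ Finset.range n, Real.log (1 + |infDist x (Aseq k) - infDist x A|)) / (n : ℝ) := by
      intro n
      apply div_nonneg _ (Nat.cast_nonneg n)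
      apply Finset.sum_nonneg
      intro k _
      apply Real.log_nonneg
      have := abs_nonneg (infDist x (Aseq k) - infDist x A)
      linarith
    apply squeeze_zero' (Eventually.of_forall hnonneg)
      (g := fun n : ℕ => Real.log n ^ 2 / (1 * (n : ℝ) + 0) * (Real.log 2)⁻¹)
    · filter_upwards [eventually_ge_atTop 2] with n hn
      have hn1 : (1 : ℝ) ≤ n := by exact_mod_cast Nat.one_le_of_lt hn
      have hnpos : (0 : ℝ) < n := by linarith
      have hlogn : 0 ≤ Real.log n := Real.log_nonneg hn1
      have hsum : (∑ k ∈ Finset.range n, Real.log (1 + |infDist x (Aseq k) - infDist x A|))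
          ≤ Real.log n ^ 2 / Real.log 2 := by
        calc (∑ k ∈ Finset.range n, Real.log (1 + |infDist x (Aseq k) - infDist x A|))
            ≤ ∑ k ∈ Finset.range n,
                (if ∃ r : ℕ, 0 < r ∧ k = 2 ^ r then Real.log n else 0) := by
              apply Finset.sum_le_sum
              intro k hk
              by_cases hc : ∃ r : ℕ, 0 < r ∧ k = 2 ^ r
              · rw [if_pos hc]
                have h1 : |infDist x (Aseq k) - infDist x A| ≤ (k : ℝ) := hterm_le x k hc
                have h2 : (0:ℝ) ≤ |infDist x (Aseq k) - infDist x A| := abs_nonneg _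
                apply Real.log_le_log (by linarith)
                have : (k : ℝ) + 1 ≤ n := by
                  exact_mod_cast Finset.mem_range.1 hk
                linarith
              · rw [if_neg hc, hterm_zero x k hc]
                simp
          _ = (((Finset.range n).filter (fun k => ∃ r : ℕ, 0 < r ∧ k = 2 ^ r)).card : ℝ)
                * Real.log n := by
              rw [Finset.sum_ite, Finset.sum_const, Finset.sum_const_zero, add_zero,
                nsmul_eq_mul]
          _ ≤ (Nat.log 2 n : ℝ) * Real.log n :=
              mul_le_mul_of_nonneg_right (by exact_mod_cast hcard n) hlogn
          _ ≤ (Real.log n / Real.log 2) * Real.log n := by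
              have h2 := Real.natLog_le_logb n 2
              rw [Real.logb] at h2
              push_cast at h2
              exact mul_le_mul_of_nonneg_right h2 hlogn
          _ = Real.log n ^ 2 / Real.log 2 := by ring
      calc (∑ k ∈ Finset.range n, Real.log (1 + |infDist x (Aseq k) - infDist x A|)) / (n : ℝ)
          ≤ (Real.log n ^ 2 / Real.log 2) / (n : ℝ) := by gcongr
        _ = Real.log n ^ 2 / (1 * (n : ℝ) + 0) * (Real.log 2)⁻¹ := by
            rw [one_mul, add_zero]; ring
    · have h1 : Tendsto (fun y : ℝ => Real.log y ^ 2 / (1 * y + 0)) atTop (nhds 0) :=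
        Real.tendsto_pow_log_div_mul_add_atTop 1 0 2 one_ne_zero
      have h2 : Tendsto (fun n : ℕ => Real.log n ^ 2 / (1 * (n : ℝ) + 0)) atTop (nhds 0) :=
        h1.comp tendsto_natCast_atTop_atTop
      simpa using h2.mul_const (Real.log 2)⁻¹
  · intro x h
    set c := x.1 with hcdef
    have hc : 0 ≤ c := x.2
    have hev := h.eventually (gt_mem_nhds (by norm_num : (0:ℝ) < 1/2))
    obtain ⟨N, hN⟩ := eventually_atTop.1 hev
    obtain ⟨m, hm⟩ := exists_nat_gt (4 * c + 1)
    set r := max (max N m) 1 with hrdef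
    have hr1 : 1 ≤ r := le_max_right _ _
    have hrr : r < 2 ^ r := Nat.lt_two_pow_self
    have hmr : m ≤ r := le_trans (le_max_right N m) (le_max_left _ _)
    have hNr : N ≤ r := le_trans (le_max_left N m) (le_max_left _ _)
    set n := 2 ^ r + 1 with hndef
    have hnN : N ≤ n := by omega
    have hlt := hN n hnN
    have hK : (4 : ℝ) * c + 1 < ((2 ^ r : ℕ) : ℝ) := by
      calc (4:ℝ) * c + 1 < m := hm
        _ ≤ ((2 ^ r : ℕ) : ℝ) := by exact_mod_cast (by omega : m ≤ 2 ^ r)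
    have hterm : ((2 ^ r : ℕ) : ℝ) - 2 * c ≤ |infDist x (Aseq (2 ^ r)) - infDist x A| := by
      rw [hAseqPos x (2 ^ r) ⟨r, hr1, rfl⟩, hA, ← hcdef]
      have h1 : ((2 ^ r : ℕ) : ℝ) - c ≤ |c - ((2 ^ r : ℕ) : ℝ)| := by
        rw [abs_sub_comm]
        calc ((2 ^ r : ℕ) : ℝ) - c ≤ |((2 ^ r : ℕ) : ℝ) - c| := le_abs_self _
          _ = _ := rfl
      calc ((2 ^ r : ℕ) : ℝ) - 2 * c = (((2 ^ r : ℕ) : ℝ) - c) - c := by ring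
        _ ≤ |c - ((2 ^ r : ℕ) : ℝ)| - c := by linarith
        _ ≤ |(|c - ((2 ^ r : ℕ) : ℝ)|) - c| := le_abs_self _
    have hmem : (2 ^ r : ℕ) ∈ Finset.range n := Finset.mem_range.2 (by omega)
    have hsum : ((2 ^ r : ℕ) : ℝ) - 2 * c
        ≤ ∑ k ∈ Finset.range n, |infDist x (Aseq k) - infDist x A| :=
      le_trans hterm (Finset.single_le_sum (f := fun k => |infDist x (Aseq k) - infDist x A|)
        (fun k _ => abs_nonneg _) hmem)
    have hnpos : (0 : ℝ) < (n : ℝ) := by positivity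
    have hge : (1:ℝ)/2 ≤ (∑ k ∈ Finset.range n, |infDist x (Aseq k) - infDist x A|) / (n : ℝ) := by
      rw [le_div_iff₀ hnpos]
      have hcast : ((n : ℕ) : ℝ) = ((2 ^ r : ℕ) : ℝ) + 1 := by
        rw [hndef]; push_cast; ring
      rw [hcast]
      nlinarith
    linarith
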